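/- Consider the log-linear model with parameters θ = (θ₁, θ₂, θ₃), θ₂ > 0, θ₃ > 0, on the design region [L,U] with 0 < L < U. Let x_l* = ((L+θ₃)(U+θ₃)/(U−L)) · log((U+θ₃)/(L+θ₃)) − θ₃. The design ξ* that puts weight 1/3 at each of the three points L, x_l*, and U satisfies det M_{ξ*} ≥ det M_ξ for every design ξ on [L,U]; that is, ξ* is D-optimal. Moreover L < x_l* < U. -/

import Mathlib

structure Design (I : Set ℝ) where
  pts : Finset ℝ
  w : ℝ → ℝ
  mem_pts : ∀ x ∈ pts, x ∈ I
  w_nonneg : ∀ x ∈ pts, 0 ≤ w x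
  w_sum : ∑ x ∈ pts, w x = 1

noncomputable def infoMat {d : ℕ} (M : ℝ → Matrix (Fin d) (Fin d) ℝ) {I : Set ℝ}
    (ξ : Design I) : Matrix (Fin d) (Fin d) ℝ :=
  ∑ x ∈ ξ.pts, ξ.w x • M x

/-- Gradient vector of the log-linear model. -/
noncomputable def fLogLin (θ₂ θ₃ : ℝ) (x : ℝ) : Fin 3 → ℝ :=
  ![1, Real.log (x + θ₃), θ₂ / (x + θ₃)]

/-- Single-observation information matrix of the log-linear model. -/
noncomputable def logLinInfo (θ₂ θ₃ : ℝ) (x : ℝ) : Matrix (Fin 3) (Fin 3) ℝ :=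
  Matrix.vecMulVec (fLogLin θ₂ θ₃ x) (fLogLin θ₂ θ₃ x)

open Real Set Matrix

namespace Stmt10Aux


/-- Rolle with explicit derivative. -/
lemma rolle0 (f f' : ℝ → ℝ) (hd : ∀ x, HasDerivAt f (f' x) x) {x y : ℝ} (hxy : x < y)
    (hx : f x = 0) (hy : f y = 0) : ∃ z ∈ Ioo x y, f' z = 0 := by
  obtain ⟨c, hc, hc'⟩ := exists_hasDerivAt_eq_slope f f' hxy
    (fun t _ => (hd t).continuousAt.continuousWithinAt) (fun t _ => hd t)
  exact ⟨c, hc, by rw [hc', hx, hy]; simp⟩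

lemma mvt_neg (f f' : ℝ → ℝ) (hd : ∀ x, HasDerivAt f (f' x) x) {x y : ℝ} (hxy : x < y)
    (h : f y < f x) : ∃ z ∈ Ioo x y, f' z < 0 := by
  obtain ⟨c, hc, hc'⟩ := exists_hasDerivAt_eq_slope f f' hxy
    (fun t _ => (hd t).continuousAt.continuousWithinAt) (fun t _ => hd t)
  refine ⟨c, hc, ?_⟩
  rw [hc']
  apply div_neg_of_neg_of_pos <;> linarith

lemma mvt_pos (f f' : ℝ → ℝ) (hd : ∀ x, HasDerivAt f (f' x) x) {x y : ℝ} (hxy : x < y)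
    (h : f x < f y) : ∃ z ∈ Ioo x y, 0 < f' z := by
  obtain ⟨c, hc, hc'⟩ := mvt_neg (fun t => -f t) (fun t => -f' t)
    (fun t => (hd t).neg) hxy (by simpa using h)
  exact ⟨c, hc, by linarith⟩

/-- If `f x = 0` and `f` has negative derivative at `x`, then `f > 0` shortly before `x`
and `f < 0` shortly after `x`. -/
lemma sign_near_of_deriv_neg {f : ℝ → ℝ} {d x : ℝ} (hd : HasDerivAt f d x) (hdn : d < 0)
    (hfx : f x = 0) :
    ∃ δ > 0, (∀ t ∈ Ioo (x - δ) x, 0 < f t) ∧ (∀ t ∈ Ioo x (x + δ), f t < 0) := by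
  have hs := (hasDerivAt_iff_tendsto_slope.mp hd)
  have hev : ∀ᶠ t in nhdsWithin x {x}ᶜ, slope f x t < 0 :=
    hs.eventually_lt_const hdn
  rw [eventually_nhdsWithin_iff] at hev
  obtain ⟨δ, hδ, hball⟩ := Metric.eventually_nhds_iff.mp hev
  refine ⟨δ, hδ, ?_, ?_⟩
  · intro t ht
    have h1 : dist t x < δ := by rw [Real.dist_eq, abs_lt]; constructor <;> simp at ht <;> linarith [ht.1, ht.2]
    have h2 : t ≠ x := ne_of_lt ht.2
    have := hball h1 h2
    rw [slope_def_field, hfx] at this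
    have htx : t - x < 0 := by linarith [ht.2]
    -- this : (f t - 0)/(t - x) < 0  with t - x < 0 gives f t > 0
    have : (f t - 0) / (t - x) < 0 := by simpa [div_sub_div_same] using this
    rcases div_neg_iff.mp this with ⟨h,h'⟩|⟨h,h'⟩ <;> linarith
  · intro t ht
    have h1 : dist t x < δ := by rw [Real.dist_eq, abs_lt]; constructor <;> simp at ht <;> linarith [ht.1, ht.2]
    have h2 : t ≠ x := ne_of_gt ht.1
    have := hball h1 h2
    rw [slope_def_field, hfx] at this
    have htx : 0 < t - x := by linarith [ht.1]
    have : (f t - 0) / (t - x) < 0 := by simpa [div_sub_div_same] using this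
    rcases div_neg_iff.mp this with ⟨h,h'⟩|⟨h,h'⟩ <;> linarith

lemma sign_near_of_deriv_pos {f : ℝ → ℝ} {d x : ℝ} (hd : HasDerivAt f d x) (hdp : 0 < d)
    (hfx : f x = 0) :
    ∃ δ > 0, (∀ t ∈ Ioo (x - δ) x, f t < 0) ∧ (∀ t ∈ Ioo x (x + δ), 0 < f t) := by
  obtain ⟨δ, hδ, h1, h2⟩ := sign_near_of_deriv_neg (f := fun t => -f t) hd.neg
    (by linarith) (by simp [hfx])
  exact ⟨δ, hδ, fun t ht => by linarith [h1 t ht], fun t ht => by linarith [h2 t ht]⟩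

/-- IVT: zero between a positive and a negative value. -/
lemma ivt_zero_pn {f : ℝ → ℝ} (hf : Continuous f) {a b : ℝ} (hab : a < b)
    (ha : 0 < f a) (hb : f b < 0) : ∃ z ∈ Ioo a b, f z = 0 := by
  have := intermediate_value_Ioo' (le_of_lt hab) hf.continuousOn (a := a) (b := b)
  have h0 : (0:ℝ) ∈ Ioo (f b) (f a) := ⟨hb, ha⟩
  obtain ⟨z, hz, hz0⟩ := this h0
  exact ⟨z, hz, hz0⟩

lemma ivt_zero_np {f : ℝ → ℝ} (hf : Continuous f) {a b : ℝ} (hab : a < b)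
    (ha : f a < 0) (hb : 0 < f b) : ∃ z ∈ Ioo a b, f z = 0 := by
  have := intermediate_value_Ioo (le_of_lt hab) hf.continuousOn (a := a) (b := b)
  obtain ⟨z, hz, hz0⟩ := this ⟨ha, hb⟩
  exact ⟨z, hz, hz0⟩


lemma affine_zero {p q z₁ z₂ : ℝ} (h : z₁ ≠ z₂) (h1 : p + q * z₁ = 0) (h2 : p + q * z₂ = 0) :
    p = 0 ∧ q = 0 := by
  have hq : q = 0 := by
    have : q * (z₁ - z₂) = 0 := by linarith
    rcases mul_eq_zero.mp this with h' | h'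
    · exact h'
    · exact absurd (by linarith : z₁ = z₂) h
  exact ⟨by simpa [hq] using h1, hq⟩

lemma Z2exp {c₀ c₁ z₁ z₂ : ℝ} (h : z₁ < z₂) (h1 : c₀ + c₁ * exp z₁ = 0)
    (h2 : c₀ + c₁ * exp z₂ = 0) : c₀ = 0 ∧ c₁ = 0 := by
  have he : exp z₁ < exp z₂ := exp_lt_exp.mpr h
  have hc₁ : c₁ = 0 := by nlinarith [h1, h2, he]
  exact ⟨by simpa [hc₁] using h1, hc₁⟩

/-- derivative helper: affine function -/
lemma hd_affine (p q : ℝ) (t : ℝ) : HasDerivAt (fun y => p + q * y) q t := by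
  simpa using ((hasDerivAt_id t).const_mul q).const_add p

/-- derivative helper: (p + q t) * exp (c t) -/
lemma hd_affine_exp (p q c : ℝ) (t : ℝ) :
    HasDerivAt (fun y => (p + q * y) * exp (c * y))
      ((q + c * (p + q * t)) * exp (c * t)) t := by
  have h1 := (hd_affine p q t).mul (((hasDerivAt_id t).const_mul c).exp)
  refine h1.congr_deriv ?_
  simp [mul_comm, mul_assoc, mul_left_comm]; ring

/-- (a+bt) + (c+dt)e^t with 4 distinct zeros is identically zero. -/
lemma Zaffexp {a b c d z₁ z₂ z₃ z₄ : ℝ} (h12 : z₁ < z₂) (h23 : z₂ < z₃) (h34 : z₃ < z₄)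
    (F : ℝ → ℝ) (hF : ∀ t, F t = (a + b * t) + (c + d * t) * exp t)
    (hz : F z₁ = 0 ∧ F z₂ = 0 ∧ F z₃ = 0 ∧ F z₄ = 0) :
    a = 0 ∧ b = 0 ∧ c = 0 ∧ d = 0 := by
  obtain ⟨e1, e2, e3, e4⟩ := hz
  set F' : ℝ → ℝ := fun t => b + (c + d + d * t) * exp t with hF'
  have hd : ∀ t, HasDerivAt F (F' t) t := by
    intro t
    have h1 := (hd_affine a b t).add (hd_affine_exp c d 1 t)
    have : F = fun y => (a + b * y) + (c + d * y) * exp (1 * y) := by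
      funext y; rw [hF]; norm_num
    rw [this]
    refine h1.congr_deriv ?_
    simp only [hF', id_eq]; try ring
  obtain ⟨w₁, hw₁, hw₁'⟩ := rolle0 F F' hd h12 e1 e2
  obtain ⟨w₂, hw₂, hw₂'⟩ := rolle0 F F' hd h23 e2 e3
  obtain ⟨w₃, hw₃, hw₃'⟩ := rolle0 F F' hd h34 e3 e4
  set F'' : ℝ → ℝ := fun t => (c + 2 * d + d * t) * exp t with hF''
  have hdd : ∀ t, HasDerivAt F' (F'' t) t := by
    intro t
    have h1 := (hasDerivAt_const t b).add (hd_affine_exp (c + d) d 1 t)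
    have : F' = fun y => b + ((c + d) + d * y) * exp (1 * y) := by
      funext y; simp only [hF']; ring
    rw [this]
    refine h1.congr_deriv ?_
    simp only [hF'', id_eq]; try ring
  have hw12 : w₁ < w₂ := lt_trans hw₁.2 hw₂.1
  have hw23 : w₂ < w₃ := lt_trans hw₂.2 hw₃.1
  obtain ⟨v₁, hv₁, hv₁'⟩ := rolle0 F' F'' hdd hw12 hw₁' hw₂'
  obtain ⟨v₂, hv₂, hv₂'⟩ := rolle0 F' F'' hdd hw23 hw₂' hw₃'
  -- F'' v = 0 means c + 2d + d v = 0 (exp ≠ 0)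
  have g1 : c + 2 * d + d * v₁ = 0 := by
    have := hv₁'; simp only [hF''] at this
    rcases mul_eq_zero.mp this with h | h
    · exact h
    · exact absurd h (exp_ne_zero _)
  have g2 : c + 2 * d + d * v₂ = 0 := by
    have := hv₂'; simp only [hF''] at this
    rcases mul_eq_zero.mp this with h | h
    · exact h
    · exact absurd h (exp_ne_zero _)
  have hv12 : v₁ ≠ v₂ := ne_of_lt (lt_trans hv₁.2 hv₂.1)
  obtain ⟨hcd, hdz⟩ := affine_zero hv12 g1 g2
  have hc : c = 0 := by linarith
  have hb : b = 0 := by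
    have := hw₁'; simp only [hF', hdz, hc] at this
    simpa using this
  have ha : a = 0 := by
    have := e1; rw [hF] at this; rw [hb, hc, hdz] at this; simpa using this
  exact ⟨ha, hb, hc, hdz⟩

/-- c + (d₀+d₁ t) e^{-t} + r e^{-2t} with 4 distinct zeros is identically zero. -/
lemma Z4D {c d₀ d₁ r z₁ z₂ z₃ z₄ : ℝ} (h12 : z₁ < z₂) (h23 : z₂ < z₃) (h34 : z₃ < z₄)
    (Ψ : ℝ → ℝ) (hΨ : ∀ t, Ψ t = c + (d₀ + d₁ * t) * exp (-t) + r * exp (-(2*t)))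
    (hz : Ψ z₁ = 0 ∧ Ψ z₂ = 0 ∧ Ψ z₃ = 0 ∧ Ψ z₄ = 0) :
    c = 0 ∧ d₀ = 0 ∧ d₁ = 0 ∧ r = 0 := by
  obtain ⟨e1, e2, e3, e4⟩ := hz
  -- G t = exp (2t) * Ψ t = c e^{2t} + (d₀+d₁t) e^t + r
  set G : ℝ → ℝ := fun t => c * exp (2*t) + (d₀ + d₁ * t) * exp t + r with hG
  have hGz : ∀ t, Ψ t = 0 → G t = 0 := by
    intro t ht
    have : exp (2*t) * Ψ t = G t := by
      rw [hΨ]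
      have h2 : exp (2*t) * exp (-t) = exp t := by rw [← exp_add]; ring_nf
      have h3 : exp (2*t) * exp (-(2*t)) = 1 := by rw [← exp_add]; simp
      simp only [hG]; linear_combination (d₀ + d₁*t) * h2 + r * h3
    rw [← this, ht, mul_zero]
  set G' : ℝ → ℝ := fun t => (2*c) * exp (2*t) + (d₀ + d₁ + d₁ * t) * exp t with hG'
  have hdG : ∀ t, HasDerivAt G (G' t) t := by
    intro t
    have h1 := ((((hasDerivAt_id t).const_mul 2).exp).const_mul c).add
      (hd_affine_exp d₀ d₁ 1 t)
    have h2 := h1.add_const r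
    have : G = fun y => c * exp (2*y) + (d₀ + d₁ * y) * exp (1*y) + r := by
      funext y; simp [hG]
    rw [this]
    refine h2.congr_deriv ?_
    simp only [hG', id_eq]; try ring
  obtain ⟨w₁, hw₁, hw₁'⟩ := rolle0 G G' hdG h12 (hGz _ e1) (hGz _ e2)
  obtain ⟨w₂, hw₂, hw₂'⟩ := rolle0 G G' hdG h23 (hGz _ e2) (hGz _ e3)
  obtain ⟨w₃, hw₃, hw₃'⟩ := rolle0 G G' hdG h34 (hGz _ e3) (hGz _ e4)
  -- K t = exp (-t) * G' t = 2c e^t + (d₀+d₁+d₁ t)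
  set K : ℝ → ℝ := fun t => (d₀ + d₁ + d₁ * t) + (2*c) * exp t with hK
  have hKz : ∀ t, G' t = 0 → K t = 0 := by
    intro t ht
    have : exp (-t) * G' t = K t := by
      simp only [hG', hK]
      have h2 : exp (-t) * exp (2*t) = exp t := by rw [← exp_add]; ring_nf
      have h3 : exp (-t) * exp t = 1 := by rw [← exp_add]; simp
      linear_combination (2*c) * h2 + (d₀ + d₁ + d₁*t) * h3
    rw [← this, ht, mul_zero]
  have hz4 : (0:ℝ) = 0 ∧ (0:ℝ) = 0 ∧ (0:ℝ)=0 ∧ (0:ℝ)=0 := by norm_num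
  have hw12 : w₁ < w₂ := lt_trans hw₁.2 hw₂.1
  have hw23 : w₂ < w₃ := lt_trans hw₂.2 hw₃.1
  -- K is of Zaffexp form with a = d₀+d₁, b = d₁, c' = 2c, d' = 0 but only 3 zeros;
  -- direct cascade: K' = d₁ + 2c e^t, two Rolle zeros
  set K' : ℝ → ℝ := fun t => d₁ + (2*c) * exp t with hK'
  have hdK : ∀ t, HasDerivAt K (K' t) t := by
    intro t
    have h1 := (hd_affine (d₀ + d₁) d₁ t).add ((hasDerivAt_id t).exp.const_mul (2*c))
    have : K = fun y => ((d₀ + d₁) + d₁ * y) + (2*c) * exp y := by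
      funext y; simp [hK]
    rw [this]
    refine h1.congr_deriv ?_
    simp [hK']
  obtain ⟨v₁, hv₁, hv₁'⟩ := rolle0 K K' hdK hw12 (hKz _ hw₁') (hKz _ hw₂')
  obtain ⟨v₂, hv₂, hv₂'⟩ := rolle0 K K' hdK hw23 (hKz _ hw₂') (hKz _ hw₃')
  have hv12 : v₁ < v₂ := lt_trans hv₁.2 hv₂.1
  obtain ⟨hd₁, hc2⟩ := Z2exp hv12 (by simpa [hK'] using hv₁') (by simpa [hK'] using hv₂')
  have hc : c = 0 := by linarith
  have hd₀ : d₀ = 0 := by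
    have := hKz _ hw₁'; simp [hK, hc, hd₁] at this; linarith
  have hr : r = 0 := by
    have := e1; rw [hΨ, hc, hd₀, hd₁] at this
    have he := exp_pos (-(2*z₁))
    nlinarith [this, he, mul_pos he he]
  exact ⟨hc, hd₀, hd₁, hr⟩

/-- p₀ + p₁ t + (q₀+q₁ t) e^{-t} + r e^{-2t} with 5 distinct zeros is identically zero. -/
lemma Z5D {p₀ p₁ q₀ q₁ r z₁ z₂ z₃ z₄ z₅ : ℝ} (h12 : z₁ < z₂) (h23 : z₂ < z₃) (h34 : z₃ < z₄)
    (h45 : z₄ < z₅)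
    (Φ : ℝ → ℝ) (hΦ : ∀ t, Φ t = p₀ + p₁ * t + (q₀ + q₁ * t) * exp (-t) + r * exp (-(2*t)))
    (hz : Φ z₁ = 0 ∧ Φ z₂ = 0 ∧ Φ z₃ = 0 ∧ Φ z₄ = 0 ∧ Φ z₅ = 0) :
    ∀ t, Φ t = 0 := by
  obtain ⟨e1, e2, e3, e4, e5⟩ := hz
  -- G t = exp (2t) Φ t = (p₀+p₁ t) e^{2t} + (q₀+q₁ t) e^t + r
  set G : ℝ → ℝ := fun t => (p₀ + p₁ * t) * exp (2*t) + (q₀ + q₁ * t) * exp t + r with hG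
  have hGz : ∀ t, Φ t = 0 → G t = 0 := by
    intro t ht
    have : exp (2*t) * Φ t = G t := by
      rw [hΦ]
      have h2 : exp (2*t) * exp (-t) = exp t := by rw [← exp_add]; ring_nf
      have h3 : exp (2*t) * exp (-(2*t)) = 1 := by rw [← exp_add]; simp
      simp only [hG]; linear_combination (q₀ + q₁*t) * h2 + r * h3
    rw [← this, ht, mul_zero]
  set G' : ℝ → ℝ := fun t => (p₁ + 2*(p₀ + p₁*t)) * exp (2*t) + (q₁ + (q₀ + q₁*t)) * exp t
    with hG'
  have hdG : ∀ t, HasDerivAt G (G' t) t := by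
    intro t
    have h1 := ((hd_affine_exp p₀ p₁ 2 t).add (hd_affine_exp q₀ q₁ 1 t)).add_const r
    have : G = fun y => (p₀ + p₁ * y) * exp (2*y) + (q₀ + q₁ * y) * exp (1*y) + r := by
      funext y; simp [hG]
    rw [this]
    refine h1.congr_deriv ?_
    simp only [hG', id_eq]; try ring
  obtain ⟨w₁, hw₁, hw₁'⟩ := rolle0 G G' hdG h12 (hGz _ e1) (hGz _ e2)
  obtain ⟨w₂, hw₂, hw₂'⟩ := rolle0 G G' hdG h23 (hGz _ e2) (hGz _ e3)
  obtain ⟨w₃, hw₃, hw₃'⟩ := rolle0 G G' hdG h34 (hGz _ e3) (hGz _ e4)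
  obtain ⟨w₄, hw₄, hw₄'⟩ := rolle0 G G' hdG h45 (hGz _ e4) (hGz _ e5)
  -- K t = exp (-t) G' t : Zaffexp form
  set K : ℝ → ℝ := fun t => ((q₁ + q₀) + q₁ * t) + ((p₁ + 2*p₀) + 2*p₁ * t) * exp t with hK
  have hKz : ∀ t, G' t = 0 → K t = 0 := by
    intro t ht
    have : exp (-t) * G' t = K t := by
      simp only [hG', hK]
      have h2 : exp (-t) * exp (2*t) = exp t := by rw [← exp_add]; ring_nf
      have h3 : exp (-t) * exp t = 1 := by rw [← exp_add]; simp
      linear_combination (p₁ + 2*(p₀ + p₁*t)) * h2 + (q₁ + (q₀ + q₁*t)) * h3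
    rw [← this, ht, mul_zero]
  have hw12 : w₁ < w₂ := lt_trans hw₁.2 hw₂.1
  have hw23 : w₂ < w₃ := lt_trans hw₂.2 hw₃.1
  have hw34 : w₃ < w₄ := lt_trans hw₃.2 hw₄.1
  obtain ⟨ha, hb, hc, hd⟩ := Zaffexp hw12 hw23 hw34 K (fun t => rfl)
    ⟨hKz _ hw₁', hKz _ hw₂', hKz _ hw₃', hKz _ hw₄'⟩
  have hq₁ : q₁ = 0 := hb
  have hq₀ : q₀ = 0 := by linarith
  have hp₁ : p₁ = 0 := by linarith
  have hp₀ : p₀ = 0 := by linarith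
  have hr : r = 0 := by
    have := e1; rw [hΦ, hq₀, hq₁, hp₀, hp₁] at this
    have he := exp_pos (-(2*z₁))
    nlinarith [this, he]
  intro t; rw [hΦ, hq₀, hq₁, hp₀, hp₁, hr]; simp


/-- Master nonnegativity lemma via zero counting. -/
lemma master {p₀ p₁ q₀ q₁ r m T : ℝ} (H Φ : ℝ → ℝ)
    (hΦ : ∀ t, Φ t = p₀ + p₁*t + (q₀+q₁*t)*exp (-t) + r*exp (-(2*t)))
    (hH : ∀ t, HasDerivAt H (Φ t) t)
    (hm0 : 0 < m) (hmT : m < T)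
    (H0 : H 0 = 0) (Hm : H m = 0) (HT : H T = 0)
    (Φm : Φ m = 0) (Φ0 : 0 < Φ 0) (ΦT : Φ T < 0) :
    ∀ t ∈ Icc 0 T, 0 ≤ H t := by
  by_contra hcon
  push_neg at hcon
  obtain ⟨τ, hτmem, hτ⟩ := hcon
  have contΦ : Continuous Φ := by
    have : Φ = fun t => p₀ + p₁*t + (q₀+q₁*t)*exp (-t) + r*exp (-(2*t)) := funext hΦ
    rw [this]; fun_prop
  set Φd : ℝ → ℝ := fun t => p₁ + ((q₁ - q₀) + (-q₁)*t)*exp (-t) + (-2*r)*exp (-(2*t))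
    with hΦddef
  have hΦd : ∀ t, HasDerivAt Φ (Φd t) t := by
    intro t
    have hfun : Φ = fun y => (p₀ + p₁*y) + ((q₀+q₁*y)*exp ((-1)*y) + (r + 0*y)*exp ((-2)*y)) := by
      funext y; rw [hΦ]; ring_nf
    rw [hfun]
    have h1 := (hd_affine p₀ p₁ t).add ((hd_affine_exp q₀ q₁ (-1) t).add
      (hd_affine_exp r 0 (-2) t))
    refine h1.congr_deriv ?_
    simp only [hΦddef]
    ring_nf
  have kill5 : ∀ u₁ u₂ u₃ u₄ u₅ : ℝ, u₁<u₂ → u₂<u₃ → u₃<u₄ → u₄<u₅ →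
      Φ u₁=0 → Φ u₂=0 → Φ u₃=0 → Φ u₄=0 → Φ u₅=0 → False := by
    intro u₁ u₂ u₃ u₄ u₅ h1 h2 h3 h4 e1 e2 e3 e4 e5
    have hall := Z5D h1 h2 h3 h4 Φ hΦ ⟨e1,e2,e3,e4,e5⟩
    have := hall 0
    linarith
  have kill4 : ∀ w₁ w₂ w₃ w₄ : ℝ, w₁<w₂ → w₂<w₃ → w₃<w₄ →
      Φd w₁=0 → Φd w₂=0 → Φd w₃=0 → Φd w₄=0 → False := by
    intro w₁ w₂ w₃ w₄ h1 h2 h3 e1 e2 e3 e4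
    obtain ⟨hc, hd₀, hd₁, hrr⟩ := Z4D h1 h2 h3 Φd (fun t => rfl) ⟨e1,e2,e3,e4⟩
    have hq₁ : q₁ = 0 := by linarith
    have hq₀ : q₀ = 0 := by linarith
    have hr0 : r = 0 := by linarith
    have hpm : Φ m = p₀ := by rw [hΦ, hc, hq₀, hq₁, hr0]; simp
    have hp₀ : p₀ = 0 := by rw [Φm] at hpm; linarith
    have : Φ 0 = 0 := by rw [hΦ, hc, hq₀, hq₁, hr0, hp₀]; simp
    linarith
  have Zside : ∀ w, 0 < w → ∃ q, 0 < q ∧ q < w ∧ 0 < H q := by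
    obtain ⟨δ, hδ, _, hrt⟩ := sign_near_of_deriv_pos (hH 0) Φ0 H0
    intro w hw
    have hmin : 0 < min w δ := lt_min hw hδ
    refine ⟨min w δ / 2, by positivity, ?_, hrt _ ⟨by positivity, ?_⟩⟩
    · have := min_le_left w δ; linarith
    · have := min_le_right w δ; simp only [zero_add]; linarith
  have Tside : ∀ w, w < T → ∃ p, w < p ∧ p < T ∧ 0 < H p := by
    obtain ⟨δ, hδ, hlt, _⟩ := sign_near_of_deriv_neg (hH T) ΦT HT
    intro w hw
    have hM : max w (T - δ) < T := max_lt hw (by linarith)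
    refine ⟨(max w (T - δ) + T)/2, ?_, ?_, hlt _ ⟨?_, ?_⟩⟩
    · have := le_max_left w (T - δ); linarith
    · linarith
    · have := le_max_right w (T - δ); linarith
    · linarith
  have hτ0 : τ ≠ 0 := by intro h; rw [h] at hτ; linarith
  have hτm : τ ≠ m := by intro h; rw [h] at hτ; linarith
  have hτT : τ ≠ T := by intro h; rw [h] at hτ; linarith
  have hτpos : 0 < τ := lt_of_le_of_ne hτmem.1 (Ne.symm hτ0)
  have hτltT : τ < T := lt_of_le_of_ne hτmem.2 hτT
  rcases lt_or_gt_of_ne hτm with hcase | hcase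
  · -- τ < m
    obtain ⟨q, hq0, hqτ, hqpos⟩ := Zside τ hτpos
    obtain ⟨s₁, hs₁, hs₁'⟩ := mvt_neg H Φ hH hqτ (by linarith)
    obtain ⟨s₂, hs₂, hs₂'⟩ := mvt_pos H Φ hH hcase (by linarith)
    obtain ⟨u₁, hu₁, hu₁'⟩ := ivt_zero_pn contΦ (by linarith [hs₁.1] : (0:ℝ) < s₁) Φ0 hs₁'
    obtain ⟨u₂, hu₂, hu₂'⟩ := ivt_zero_np contΦ (lt_trans hs₁.2 hs₂.1) hs₁' hs₂'
    by_cases hB : ∃ σ ∈ Ioo m T, H σ < 0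
    · obtain ⟨σ, hσ, hσneg⟩ := hB
      obtain ⟨sa, hsa, hsa'⟩ := mvt_neg H Φ hH hσ.1 (by linarith)
      obtain ⟨p, hp1, hp2, hppos⟩ := Tside σ hσ.2
      obtain ⟨s₃, hs₃, hs₃'⟩ := mvt_pos H Φ hH hp1 (by linarith)
      have hs₂sa : s₂ < sa := lt_trans hs₂.2 hsa.1
      obtain ⟨u₃, hu₃, hu₃'⟩ := ivt_zero_pn contΦ hs₂sa hs₂' hsa'
      obtain ⟨u₄, hu₄, hu₄'⟩ := ivt_zero_np contΦ (lt_trans hsa.2 hs₃.1) hsa' hs₃'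
      obtain ⟨u₅, hu₅, hu₅'⟩ := ivt_zero_pn contΦ (lt_trans hs₃.2 hp2) hs₃' ΦT
      exact kill5 u₁ u₂ u₃ u₄ u₅ (lt_trans hu₁.2 hu₂.1) (lt_trans hu₂.2 hu₃.1)
        (lt_trans hu₃.2 hu₄.1) (lt_trans hu₄.2 hu₅.1) hu₁' hu₂' hu₃' hu₄' hu₅'
    · push_neg at hB
      obtain ⟨u₄, hu₄, hu₄'⟩ := rolle0 H Φ hH hmT Hm HT
      rcases lt_trichotomy (Φd m) 0 with hd0 | hd0 | hd0
      · -- Φ < 0 just right of m, so H dips negative: contradiction with hB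
        obtain ⟨δ, hδ, _, hrt⟩ := sign_near_of_deriv_neg (hΦd m) hd0 Φm
        have hmin : 0 < min δ (T - m) := lt_min hδ (by linarith)
        set pt := m + min δ (T - m) / 2 with hpt
        have hptm : m < pt := by simp only [hpt]; linarith
        have hptT : pt < T := by
          have := min_le_right δ (T - m); simp only [hpt]; linarith
        obtain ⟨c, hcmem, hceq⟩ := exists_hasDerivAt_eq_slope H Φ hptm
          (fun t _ => (hH t).continuousAt.continuousWithinAt) (fun t _ => hH t)
        have hcneg : Φ c < 0 := by
          apply hrt
          constructor
          · exact hcmem.1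
          · have h1 : pt ≤ m + δ := by
              have := min_le_left δ (T - m); simp only [hpt]; linarith
            linarith [hcmem.2]
        have hHpt : H pt < 0 := by
          have heq : Φ c = (H pt - H m) / (pt - m) := hceq
          rw [Hm, sub_zero] at heq
          have hpos : 0 < pt - m := by linarith
          have := (div_neg_iff.mp (heq ▸ hcneg))
          rcases this with ⟨h1, _⟩ | ⟨h1, _⟩
          · linarith
          · linarith
        exact absurd (hB pt ⟨hptm, hptT⟩) (not_le.mpr hHpt)
      · -- Φd m = 0 : kill4
        obtain ⟨w₁, hw₁, hw₁'⟩ := rolle0 Φ Φd hΦd (lt_trans hu₁.2 hu₂.1) hu₁' hu₂'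
        obtain ⟨w₂, hw₂, hw₂'⟩ := rolle0 Φ Φd hΦd (lt_trans hu₂.2 hs₂.2) hu₂' Φm
        obtain ⟨w₃, hw₃, hw₃'⟩ := rolle0 Φ Φd hΦd hu₄.1 Φm hu₄'
        exact kill4 w₁ w₂ m w₃ (lt_trans hw₁.2 hw₂.1) hw₂.2 hw₃.1 hw₁' hw₂' hd0 hw₃'
      · -- Φd m > 0 : Φ < 0 just left of m
        obtain ⟨δ, hδ, hlt, _⟩ := sign_near_of_deriv_pos (hΦd m) hd0 Φm
        have hMlt : max s₂ (m - δ) < m := max_lt hs₂.2 (by linarith)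
        set tl := (max s₂ (m - δ) + m)/2 with htl
        have htl1 : s₂ < tl := by
          have := le_max_left s₂ (m - δ); simp only [htl]; linarith
        have htl2 : tl < m := by simp only [htl]; linarith
        have htlneg : Φ tl < 0 := by
          apply hlt
          constructor
          · have := le_max_right s₂ (m - δ); simp only [htl]; linarith
          · exact htl2
        obtain ⟨u₃, hu₃, hu₃'⟩ := ivt_zero_pn contΦ htl1 hs₂' htlneg
        exact kill5 u₁ u₂ u₃ m u₄ (lt_trans hu₁.2 hu₂.1) (lt_trans hu₂.2 hu₃.1)
          (lt_trans hu₃.2 htl2) hu₄.1 hu₁' hu₂' hu₃' Φm hu₄'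
  · -- τ > m
    obtain ⟨p, hpτ, hpT, hppos⟩ := Tside τ hτltT
    obtain ⟨s₁, hs₁, hs₁'⟩ := mvt_neg H Φ hH hcase (by linarith)
    obtain ⟨s₂, hs₂, hs₂'⟩ := mvt_pos H Φ hH hpτ (by linarith)
    obtain ⟨u₅, hu₅, hu₅'⟩ := ivt_zero_np contΦ (lt_trans hs₁.2 hs₂.1) hs₁' hs₂'
    obtain ⟨u₆, hu₆, hu₆'⟩ := ivt_zero_pn contΦ (lt_trans hs₂.2 hpT) hs₂' ΦT
    by_cases hB : ∃ σ ∈ Ioo 0 m, H σ < 0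
    · obtain ⟨σ, hσ, hσneg⟩ := hB
      obtain ⟨sa, hsa, hsa'⟩ := mvt_neg H Φ hH hσ.1 (by linarith)
      obtain ⟨sb, hsb, hsb'⟩ := mvt_pos H Φ hH hσ.2 (by linarith)
      obtain ⟨v₁, hv₁, hv₁'⟩ := ivt_zero_pn contΦ hsa.1 Φ0 hsa'
      obtain ⟨v₂, hv₂, hv₂'⟩ := ivt_zero_np contΦ (lt_trans hsa.2 hsb.1) hsa' hsb'
      have hsbs₁ : sb < s₁ := lt_trans hsb.2 hs₁.1
      obtain ⟨v₃, hv₃, hv₃'⟩ := ivt_zero_pn contΦ hsbs₁ hsb' hs₁'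
      exact kill5 v₁ v₂ v₃ u₅ u₆ (lt_trans hv₁.2 hv₂.1) (lt_trans hv₂.2 hv₃.1)
        (lt_trans hv₃.2 hu₅.1) (lt_trans hu₅.2 hu₆.1) hv₁' hv₂' hv₃' hu₅' hu₆'
    · push_neg at hB
      obtain ⟨u₀, hu₀, hu₀'⟩ := rolle0 H Φ hH hm0 H0 Hm
      rcases lt_trichotomy (Φd m) 0 with hd0 | hd0 | hd0
      · -- Φ > 0 just left of m: H negative just left: contra hB
        obtain ⟨δ, hδ, hlt, _⟩ := sign_near_of_deriv_neg (hΦd m) hd0 Φm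
        have hmin : 0 < min δ m := lt_min hδ hm0
        set pt := m - min δ m / 2 with hpt
        have hptm : pt < m := by simp only [hpt]; linarith
        have hpt0 : 0 < pt := by
          have := min_le_right δ m; simp only [hpt]; linarith
        obtain ⟨c, hcmem, hceq⟩ := exists_hasDerivAt_eq_slope H Φ hptm
          (fun t _ => (hH t).continuousAt.continuousWithinAt) (fun t _ => hH t)
        have hcpos : 0 < Φ c := by
          apply hlt
          constructor
          · have h1 : m - δ ≤ pt := by
              have := min_le_left δ m; simp only [hpt]; linarith
            linarith [hcmem.1]
          · exact hcmem.2
        have hHpt : H pt < 0 := by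
          have heq : Φ c = (H m - H pt) / (m - pt) := hceq
          rw [Hm, zero_sub] at heq
          have hpos : 0 < m - pt := by linarith
          have h2 : 0 < (-H pt) / (m - pt) := heq ▸ hcpos
          have := (div_pos_iff.mp h2)
          rcases this with ⟨h1, _⟩ | ⟨h1, _⟩
          · linarith
          · linarith
        exact absurd (hB pt ⟨hpt0, hptm⟩) (not_le.mpr hHpt)
      · -- Φd m = 0 : kill4 with zeros u₀ < m < u₅ < u₆ of Φ
        obtain ⟨w₁, hw₁, hw₁'⟩ := rolle0 Φ Φd hΦd hu₀.2 hu₀' Φm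
        obtain ⟨w₂, hw₂, hw₂'⟩ := rolle0 Φ Φd hΦd (lt_trans hs₁.1 hu₅.1 : m < u₅) Φm hu₅'
        obtain ⟨w₃, hw₃, hw₃'⟩ := rolle0 Φ Φd hΦd (lt_trans hu₅.2 hu₆.1) hu₅' hu₆'
        exact kill4 w₁ m w₂ w₃ hw₁.2 hw₂.1 (lt_trans hw₂.2 hw₃.1) hw₁' hd0 hw₂' hw₃'
      · -- Φd m > 0 : Φ > 0 just right of m
        obtain ⟨δ, hδ, _, hrt⟩ := sign_near_of_deriv_pos (hΦd m) hd0 Φm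
        have hMlt : m < min s₁ (m + δ) := lt_min hs₁.1 (by linarith)
        set tr := (m + min s₁ (m + δ))/2 with htr
        have htr1 : m < tr := by simp only [htr]; linarith
        have htr2 : tr < s₁ := by
          have := min_le_left s₁ (m + δ); simp only [htr]; linarith
        have htrpos : 0 < Φ tr := by
          apply hrt
          constructor
          · exact htr1
          · have := min_le_right s₁ (m + δ); simp only [htr]; linarith
        obtain ⟨u₄, hu₄, hu₄'⟩ := ivt_zero_pn contΦ htr2 htrpos hs₁'
        exact kill5 u₀ m u₄ u₅ u₆ hu₀.2
          (lt_trans htr1 hu₄.1) (lt_trans hu₄.2 hu₅.1) (lt_trans hu₅.2 hu₆.1)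
          hu₀' Φm hu₄' hu₅' hu₆'


/-- `0 ≤ T(e^T - e^{-T}) - e^T - e^{-T} + 2 - T²` for `T ≥ 0`. -/
lemma exp_ineq_k {T : ℝ} (hT : 0 ≤ T) :
    0 ≤ T*(exp T - exp (-T)) - exp T - exp (-T) + 2 - T^2 := by
  set k : ℝ → ℝ := fun x => x*(exp x - exp (-x)) - exp x - exp (-x) + 2 - x^2 with hk
  have hd : ∀ x, HasDerivAt k (x*(exp x + exp (-x)) - 2*x) x := by
    intro x
    have h1 : HasDerivAt (fun y : ℝ => exp (-y)) (-exp (-x)) x := by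
      simpa using ((hasDerivAt_id x).neg).exp
    have h2 := ((hasDerivAt_id x).mul ((Real.hasDerivAt_exp x).sub h1)).sub
      (Real.hasDerivAt_exp x) |>.sub h1 |>.add_const 2 |>.sub
      ((hasDerivAt_pow 2 x))
    refine h2.congr_deriv ?_
    simp only [id_eq, Pi.sub_apply]
    push_cast
    ring
  have hmono : MonotoneOn k (Ici 0) := by
    apply monotoneOn_of_deriv_nonneg (convex_Ici 0)
      (Continuous.continuousOn (by fun_prop))
      (fun x _ => (hd x).differentiableAt.differentiableWithinAt)
    intro x hx
    rw [interior_Ici] at hx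
    rw [(hd x).deriv]
    have e1 : x + 1 ≤ exp x := by linarith [add_one_le_exp x]
    have e2 : 1 - x ≤ exp (-x) := by linarith [add_one_le_exp (-x)]
    have hx0 : 0 < x := hx
    nlinarith
  have h00 : k 0 = 0 := by simp [hk]; norm_num
  have hTT := hmono self_mem_Ici (mem_Ici.mpr hT) hT
  rw [h00] at hTT
  exact hTT

set_option maxHeartbeats 1600000 in
/-- Core t-space lemma. -/
lemma tspace {T a μ m : ℝ} (hT : 0 < T) (ha : a = exp (-T)) (hμ : μ * T = 1 - a)
    (hem : exp (-m) = μ) :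
    0 < m ∧ m < T ∧ 0 < m*a - μ*T + T - m ∧
    ∀ t ∈ Icc 0 T,
      ((m*a - μ*T) + t*(μ - a) + exp (-t) * (T - m))^2
      + (t*a - T*exp (-t) + T - t)^2
      + (m*exp (-t) - t*μ + t - m)^2 ≤ (m*a - μ*T + T - m)^2 := by
  have hTne : T ≠ 0 := ne_of_gt hT
  have hapos : 0 < a := ha ▸ exp_pos _
  have ha1 : a < 1 := by
    rw [ha]
    have : exp (-T) < exp 0 := exp_lt_exp.mpr (by linarith)
    simpa using this
  have hμpos : 0 < μ := by nlinarith
  have haE : a * exp T = 1 := by rw [ha, ← exp_add]; simp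
  have hE : T + 1 < exp T := by
    have := add_one_lt_exp (ne_of_gt hT); linarith
  have haμ : a < μ := by nlinarith
  have hμ1 : μ < 1 := by
    have h2 : -T + 1 < a := by
      rw [ha]
      have hne : (-T) ≠ 0 := by intro h; rw [neg_eq_zero] at h; exact hTne h
      have := add_one_lt_exp hne
      linarith
    nlinarith
  have hm0 : 0 < m := by
    have : exp (-m) < exp 0 := by rw [hem]; simpa using hμ1
    have := exp_lt_exp.mp this; linarith
  have hmT : m < T := by
    have : exp (-T) < exp (-m) := by rw [hem, ← ha]; exact haμ
    have := exp_lt_exp.mp this; linarith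
  have hlogμ : Real.log μ = -m := by rw [← hem, Real.log_exp]
  -- m < 1/μ - 1, i.e. m*μ < 1 - μ
  have hmμ : m * μ < 1 - μ := by
    have h1 : Real.log μ⁻¹ < μ⁻¹ - 1 :=
      Real.log_lt_sub_one_of_pos (by positivity) (by
        intro h; rw [inv_eq_one] at h; linarith)
    rw [Real.log_inv, hlogμ, neg_neg] at h1
    have h2 : m * μ < (μ⁻¹ - 1) * μ := by
      exact (mul_lt_mul_of_pos_right h1 hμpos)
    have h3 : (μ⁻¹ - 1) * μ = 1 - μ := by field_simp
    linarith [h3 ▸ h2]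
  have hV : 0 < m*a - μ*T + T - m := by
    -- m*(1-a) < T + a - 1
    have h1 : m * (μ * T) < (1 - μ) * T := by nlinarith
    rw [hμ] at h1
    nlinarith
  have hN4 : μ + a*m < 1 := by
    -- a*m*μ < a*(1-μ) ≤ μ*(1-μ)
    have h1 : a*m*μ < a*(1-μ) := by nlinarith
    have h2 : a*(1-μ) < μ*(1-μ) := by nlinarith
    have h3 : a*m*μ < μ*(1-μ) := lt_trans h1 h2
    nlinarith
  have hN3 : 0 < a + T - m - μ := by
    have hk := exp_ineq_k hT.le
    have hG : 0 ≤ T*(1-a)*(a+T+1) - (1-a)^2 - T^2 := by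
      have heq : T*(1-a)*(a+T+1) - (1-a)^2 - T^2
          = a * (T*(exp T - exp (-T)) - exp T - exp (-T) + 2 - T^2) := by
        rw [← ha]
        linear_combination (1 - T) * haE
      rw [heq]
      exact mul_nonneg hapos.le hk
    have hE2 : (μ*(a+T-μ) - (1-μ))*T^2 = T*(1-a)*(a+T+1) - (1-a)^2 - T^2 := by
      linear_combination (a*T + T^2 + T - μ*T - (1-a)) * hμ
    have h4 : 0 ≤ μ*(a+T-μ) - (1-μ) := by
      have hT2 : 0 < T^2 := by positivity
      nlinarith [hG, hE2]
    -- m*μ < 1-μ ≤ μ*(a+T-μ)  so m < a+T-μ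
    have h5 : m * μ < μ*(a+T-μ) := by linarith
    have h6 : m < a+T-μ := by
      have := (mul_lt_mul_iff_of_pos_right hμpos).mp (by linarith [h5] : m * μ < (a+T-μ) * μ)
      exact this
    linarith
  refine ⟨hm0, hmT, hV, ?_⟩
  -- set up H and master
  set V0 : ℝ → ℝ := fun t => (m*a - μ*T) + t*(μ - a) + exp (-t) * (T - m) with hV0
  set V1 : ℝ → ℝ := fun t => t*a - T*exp (-t) + T - t with hV1
  set V2 : ℝ → ℝ := fun t => m*exp (-t) - t*μ + t - m with hV2
  set H : ℝ → ℝ := fun t => V0 t * V1 t + V0 t * V2 t + V1 t * V2 t with hH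
  -- coefficients of Φ = H'
  set al0 : ℝ := m*a - μ*T with hal0
  set p₀ : ℝ := ((μ-a)*T + (a-1)*al0) + ((μ-a)*(-m) + (1-μ)*al0) + ((a-1)*(-m) + (1-μ)*T)
    with hp₀
  set p₁ : ℝ := 2*((μ-a)*(a-1) + (μ-a)*(1-μ) + (a-1)*(1-μ)) with hp₁
  set q₀ : ℝ := ((μ-a)*(-T) + (a-1)*(T-m) - (T-m)*T - (-T)*al0)
    + ((μ-a)*m + (1-μ)*(T-m) - (T-m)*(-m) - m*al0)
    + ((a-1)*m + (1-μ)*(-T) - (-T)*(-m) - m*T) with hq₀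
  set q₁ : ℝ := -((T-m)*(a-1) + (-T)*(μ-a)) - ((T-m)*(1-μ) + m*(μ-a)) - ((-T)*(1-μ) + m*(a-1))
    with hq₁
  set r : ℝ := -2*((T-m)*(-T) + (T-m)*m + (-T)*m) with hr
  set Φ : ℝ → ℝ := fun t => p₀ + p₁*t + (q₀+q₁*t)*exp (-t) + r*exp (-(2*t)) with hΦ
  have he2 : ∀ t : ℝ, exp (-(2*t)) = exp (-t) * exp (-t) := by
    intro t; rw [← exp_add]; ring_nf
  have hdH : ∀ t, HasDerivAt H (Φ t) t := by
    intro t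
    have hs : HasDerivAt (fun y : ℝ => exp (-y)) (-exp (-t)) t := by
      simpa using ((hasDerivAt_id t).neg).exp
    have hd0 : HasDerivAt V0 ((μ - a) + (-exp (-t)) * (T - m)) t := by
      have h := ((((hasDerivAt_id t).mul_const (μ - a)).add (hs.mul_const (T - m))).const_add
        (m*a - μ*T))
      convert h using 1 <;>
        first
          | rfl
          | (funext y; simp only [hV0, id_eq, Pi.add_apply, hal0]; ring)
          | (try simp only [id_eq]); ring
    have hd1 : HasDerivAt V1 (a - T*(-exp (-t)) - 1) t := by
      have h := ((((hasDerivAt_id t).mul_const a).sub (hs.const_mul T)).add_const T).sub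
        (hasDerivAt_id t)
      convert h using 1 <;>
        first
          | rfl
          | (funext y; simp only [hV1, id_eq]; ring)
          | (try simp only [id_eq]); ring
    have hd2 : HasDerivAt V2 (m*(-exp (-t)) - μ + 1) t := by
      have h := ((((hs.const_mul m).sub ((hasDerivAt_id t).mul_const μ)).add
        (hasDerivAt_id t)).sub_const m)
      convert h using 1 <;>
        first
          | rfl
          | (funext y; simp only [hV2, id_eq]; ring)
          | (try simp only [id_eq]); ring
    have hprod := ((hd0.mul hd1).add (hd0.mul hd2)).add (hd1.mul hd2)
    refine hprod.congr_deriv ?_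
    simp only [hΦ, hV0, hV1, hV2, hp₀, hp₁, hq₀, hq₁, hr, hal0, he2 t]
    ring
  have hMaster := master H Φ (fun t => rfl) hdH hm0 hmT
    (by simp only [hH, hV0, hV1, hV2]; rw [neg_zero, exp_zero]; ring)
    (by simp only [hH, hV0, hV1, hV2]; rw [hem]; ring)
    (by simp only [hH, hV0, hV1, hV2]; rw [← ha]; ring)
    (by simp only [hΦ]; rw [he2 m, hem]
        simp only [hp₀, hp₁, hq₀, hq₁, hr, hal0]
        linear_combination (-(m*a - T*μ + T - m)) * hμ)
    (by have hΦ0 : Φ 0 = (m*a - μ*T + T - m)*(a + T - m - μ) := by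
          simp only [hΦ, mul_zero, neg_zero, exp_zero]
          simp only [hp₀, hp₁, hq₀, hq₁, hr, hal0]
          ring
        rw [hΦ0]
        exact mul_pos hV hN3)
    (by have hΦT : Φ T = (m*a - μ*T + T - m)*(μ + a*m - 1) := by
          simp only [hΦ]
          rw [he2 T, ← ha]
          simp only [hp₀, hp₁, hq₀, hq₁, hr, hal0]
          ring
        rw [hΦT]
        exact mul_neg_of_pos_of_neg hV (by linarith))
  intro t ht
  have h0 := hMaster t ht
  have hsum : V0 t + V1 t + V2 t = m*a - μ*T + T - m := by
    simp only [hV0, hV1, hV2]; ring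
  simp only [hH] at h0
  have hsq : (V0 t + V1 t + V2 t)^2 = (m*a - μ*T + T - m)^2 := by rw [hsum]
  simp only [hV0, hV1, hV2] at h0 hsq
  nlinarith [h0, hsq]




lemma outer_conj (A : Matrix (Fin 3) (Fin 3) ℝ) (u : Fin 3 → ℝ) :
    Matrix.vecMulVec (Matrix.mulVec Aᵀ u) (Matrix.mulVec Aᵀ u) = Aᵀ * (Matrix.vecMulVec u u) * A := by
  ext i j
  simp only [Matrix.vecMulVec_apply, Matrix.mulVec, Matrix.mul_apply, dotProduct,
    Fin.sum_univ_three, Matrix.transpose_apply]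
  ring

lemma amgm3 {p q r : ℝ} (hp : 0 ≤ p) (hq : 0 ≤ q) (hr : 0 ≤ r) (h : p + q + r ≤ 1) :
    p * q * r ≤ 1/27 := by
  nlinarith [sq_nonneg (p - q), sq_nonneg (q - r), sq_nonneg (p - r), sq_nonneg (p + q + r),
    mul_nonneg hp hq, mul_nonneg hq hr, mul_nonneg hp hr]

lemma hadamard_step {p q r x y z : ℝ} (hp : 0 ≤ p) (hq : 0 ≤ q) (hr : 0 ≤ r)
    (hx : x^2 ≤ q*r) (hy : y^2 ≤ p*r) (hz : z^2 ≤ p*q) :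
    2*(x*y*z) ≤ p*x^2 + q*y^2 + r*z^2 := by
  rcases le_or_gt (x*y*z) 0 with hc | hc
  · nlinarith [mul_nonneg hp (sq_nonneg x), mul_nonneg hq (sq_nonneg y),
      mul_nonneg hr (sq_nonneg z)]
  · have hkey : (q*y^2 + r*z^2)^2 - 4*(x*y*z)^2 =
        (q*y^2 - r*z^2)^2 + 4*(q*r - x^2)*(y^2*z^2) := by ring
    have h1 : 0 ≤ (q*y^2 - r*z^2)^2 + 4*(q*r - x^2)*(y^2*z^2) := by
      have := mul_nonneg (sub_nonneg.mpr hx) (mul_nonneg (sq_nonneg y) (sq_nonneg z))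
      nlinarith [sq_nonneg (q*y^2 - r*z^2)]
    have h2 : (2*(x*y*z))^2 ≤ (q*y^2 + r*z^2)^2 := by nlinarith [hkey, h1]
    have h3 : 0 ≤ q*y^2 + r*z^2 := by
      have := mul_nonneg hq (sq_nonneg y); have := mul_nonneg hr (sq_nonneg z); linarith
    have h4 : 2*(x*y*z) ≤ q*y^2 + r*z^2 := by nlinarith [h2, h3, hc]
    nlinarith [mul_nonneg hp (sq_nonneg x)]

/-- determinant bound for weighted sums of rank-one matrices from unit-ball vectors. -/
lemma detS_le (pts : Finset ℝ) (w : ℝ → ℝ) (b : ℝ → Fin 3 → ℝ)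
    (hw : ∀ x ∈ pts, 0 ≤ w x) (hsum : ∑ x ∈ pts, w x = 1)
    (hb : ∀ x ∈ pts, (b x 0)^2 + (b x 1)^2 + (b x 2)^2 ≤ 1) :
    (∑ x ∈ pts, w x • Matrix.vecMulVec (b x) (b x)).det ≤ 1/27 := by
  set S := ∑ x ∈ pts, w x • Matrix.vecMulVec (b x) (b x) with hSdef
  have hS : ∀ i j, S i j = ∑ x ∈ pts, w x * (b x i * b x j) := by
    intro i j
    rw [hSdef]
    rw [Matrix.sum_apply]
    apply Finset.sum_congr rfl
    intro x hx
    simp [Matrix.vecMulVec_apply]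
  have minor : ∀ i j, (S i j)^2 ≤ S i i * S j j := by
    intro i j
    rw [hS, hS, hS]
    have hcs := Finset.sum_mul_sq_le_sq_mul_sq pts (fun x => Real.sqrt (w x) * b x i)
      (fun x => Real.sqrt (w x) * b x j)
    have e1 : ∑ x ∈ pts, (Real.sqrt (w x) * b x i) * (Real.sqrt (w x) * b x j)
        = ∑ x ∈ pts, w x * (b x i * b x j) := by
      apply Finset.sum_congr rfl; intro x hx
      have : Real.sqrt (w x) * Real.sqrt (w x) = w x := Real.mul_self_sqrt (hw x hx)
      linear_combination (b x i * b x j) * this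
    have e2 : ∑ x ∈ pts, (Real.sqrt (w x) * b x i)^2 = ∑ x ∈ pts, w x * (b x i * b x i) := by
      apply Finset.sum_congr rfl; intro x hx
      have : Real.sqrt (w x) * Real.sqrt (w x) = w x := Real.mul_self_sqrt (hw x hx)
      linear_combination (b x i * b x i) * this
    have e3 : ∑ x ∈ pts, (Real.sqrt (w x) * b x j)^2 = ∑ x ∈ pts, w x * (b x j * b x j) := by
      apply Finset.sum_congr rfl; intro x hx
      have : Real.sqrt (w x) * Real.sqrt (w x) = w x := Real.mul_self_sqrt (hw x hx)
      linear_combination (b x j * b x j) * this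
    rw [e1, e2, e3] at hcs
    exact hcs
  have diag : ∀ i, 0 ≤ S i i := by
    intro i; rw [hS]
    exact Finset.sum_nonneg fun x hx => mul_nonneg (hw x hx) (mul_self_nonneg _)
  have tr : S 0 0 + S 1 1 + S 2 2 ≤ 1 := by
    rw [hS, hS, hS, ← Finset.sum_add_distrib, ← Finset.sum_add_distrib, ← hsum]
    apply Finset.sum_le_sum
    intro x hx
    nlinarith [hb x hx, hw x hx]
  have hsym : S 1 0 = S 0 1 ∧ S 2 0 = S 0 2 ∧ S 2 1 = S 1 2 := by
    refine ⟨?_, ?_, ?_⟩ <;> (rw [hS, hS]; apply Finset.sum_congr rfl; intro x hx; ring)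
  rw [Matrix.det_fin_three, hsym.1, hsym.2.1, hsym.2.2]
  have h01 := minor 0 1
  have h02 := minor 0 2
  have h12 := minor 1 2
  have step1 := hadamard_step (diag 0) (diag 1) (diag 2) h12 h02 h01
  have step2 := amgm3 (diag 0) (diag 1) (diag 2) tr
  nlinarith [step1, step2]


end Stmt10Aux

open Stmt10Aux

set_option maxHeartbeats 2000000 in
/-- the design with weight 1/3 at each of `L`, `x_l*`, `U` is D-optimal
for the log-linear model, and `L < x_l* < U`. -/
theorem stmt10 (θ₁ θ₂ θ₃ : ℝ) (hθ₂ : 0 < θ₂) (hθ₃ : 0 < θ₃) (L U : ℝ)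
    (hL : 0 < L) (hLU : L < U) :
    (∀ ξ : Design (Set.Icc L U),
      (infoMat (logLinInfo θ₂ θ₃) ξ).det ≤
        ((1 / 3 : ℝ) • logLinInfo θ₂ θ₃ L +
          (1 / 3 : ℝ) • logLinInfo θ₂ θ₃ ((L + θ₃) * (U + θ₃) / (U - L) * Real.log ((U + θ₃) / (L + θ₃)) - θ₃) +
          (1 / 3 : ℝ) • logLinInfo θ₂ θ₃ U).det) ∧
    L < ((L + θ₃) * (U + θ₃) / (U - L) * Real.log ((U + θ₃) / (L + θ₃)) - θ₃) ∧
    ((L + θ₃) * (U + θ₃) / (U - L) * Real.log ((U + θ₃) / (L + θ₃)) - θ₃) < U := by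
  have hc3 : (0:ℝ) < L + θ₃ := by linarith
  have hD3 : (0:ℝ) < U + θ₃ := by linarith
  have hDc : L + θ₃ < U + θ₃ := by linarith
  have hUL : (0:ℝ) < U - L := by linarith
  set T := Real.log ((U + θ₃) / (L + θ₃)) with hTdef
  have hT : 0 < T := log_pos ((one_lt_div hc3).mpr hDc)
  have hTne : T ≠ 0 := ne_of_gt hT
  set a := exp (-T) with hadef
  have haval : a = (L + θ₃)/(U + θ₃) := by
    rw [hadef, Real.exp_neg, hTdef, exp_log (by positivity), inv_div]
  set μ := (1 - a)/T with hμdef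
  have hμT : μ * T = 1 - a := div_mul_cancel₀ _ hTne
  set xs := (L + θ₃) * (U + θ₃) / (U - L) * T - θ₃ with hxsdef
  have hxs3 : xs + θ₃ = (L + θ₃) * (U + θ₃) * T / (U - L) := by rw [hxsdef]; ring
  have hxspos : 0 < xs + θ₃ := by rw [hxs3]; positivity
  set m := Real.log ((xs + θ₃)/(L + θ₃)) with hmdef
  have hem : exp (-m) = μ := by
    rw [hmdef, Real.exp_neg, exp_log (by positivity), hμdef, haval, hxs3]
    field_simp
    ring
  obtain ⟨hm0, hmT, hVpos, hbound⟩ := tspace hT hadef hμT hem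
  have hexpm : exp m = (xs + θ₃)/(L + θ₃) := by rw [hmdef, exp_log (by positivity)]
  have hexpT : exp T = (U + θ₃)/(L + θ₃) := by rw [hTdef, exp_log (by positivity)]
  have hLxs : L < xs := by
    have h1 : exp 0 < exp m := exp_lt_exp.mpr hm0
    rw [exp_zero, hexpm] at h1
    have := (one_lt_div hc3).mp h1
    linarith
  have hxsU : xs < U := by
    have h1 : exp m < exp T := exp_lt_exp.mpr hmT
    rw [hexpm, hexpT] at h1
    rw [div_lt_div_iff_of_pos_right hc3] at h1
    linarith
  refine ⟨?_, hLxs, hxsU⟩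
  intro ξ
  have hVne : m*a - μ*T + T - m ≠ 0 := ne_of_gt hVpos
  set tx : ℝ → ℝ := fun x => Real.log ((x + θ₃)/(L + θ₃)) with htxdef
  set b : ℝ → Fin 3 → ℝ := fun x =>
    ![((m*a - μ*T) + tx x*(μ - a) + exp (-(tx x))*(T - m))/(m*a - μ*T + T - m),
      (tx x*a - T*exp (-(tx x)) + T - tx x)/(m*a - μ*T + T - m),
      (m*exp (-(tx x)) - tx x*μ + tx x - m)/(m*a - μ*T + T - m)] with hbdef
  set Fx : Matrix (Fin 3) (Fin 3) ℝ :=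
    Matrix.of ![fLogLin θ₂ θ₃ L, fLogLin θ₂ θ₃ xs, fLogLin θ₂ θ₃ U] with hFx
  have hx3 : ∀ x ∈ Icc L U, (0:ℝ) < x + θ₃ := fun x hx => by
    have := hx.1; linarith
  have htx0 : ∀ x ∈ Icc L U, 0 ≤ tx x := by
    intro x hx
    apply log_nonneg
    rw [le_div_iff₀ hc3]
    have := hx.1; linarith
  have htxT : ∀ x ∈ Icc L U, tx x ≤ T := by
    intro x hx
    simp only [htxdef, hTdef]
    apply Real.log_le_log (div_pos (hx3 x hx) hc3)
    apply div_le_div_of_nonneg_right (by linarith [hx.2]) hc3.le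
  have hxe : ∀ x ∈ Icc L U, exp (-(tx x)) * (x + θ₃) = L + θ₃ := by
    intro x hx
    have hxp := hx3 x hx
    simp only [htxdef]
    rw [Real.exp_neg, exp_log (by positivity), inv_div]
    exact div_mul_cancel₀ _ (ne_of_gt hxp)
  have hμxs : μ * (xs + θ₃) = L + θ₃ := by
    have h1 : exp (-m) = (L + θ₃)/(xs + θ₃) := by
      rw [Real.exp_neg, hexpm, inv_div]
    rw [← hem, h1]
    exact div_mul_cancel₀ _ (ne_of_gt hxspos)
  have haU : a * (U + θ₃) = L + θ₃ := by
    rw [haval]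
    exact div_mul_cancel₀ _ (ne_of_gt hD3)
  have hlm : Real.log (xs + θ₃) = m + Real.log (L + θ₃) := by
    rw [hmdef, log_div (ne_of_gt hxspos) (ne_of_gt hc3)]; ring
  have hlU : Real.log (U + θ₃) = T + Real.log (L + θ₃) := by
    rw [hTdef, log_div (ne_of_gt hD3) (ne_of_gt hc3)]; ring
  have hlx : ∀ x ∈ Icc L U, Real.log (x + θ₃) = tx x + Real.log (L + θ₃) := by
    intro x hx
    simp only [htxdef]
    rw [log_div (ne_of_gt (hx3 x hx)) (ne_of_gt hc3)]; ring
  -- the key barycentric identity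
  have key : ∀ x ∈ Icc L U, fLogLin θ₂ θ₃ x = Matrix.mulVec Fxᵀ (b x) := by
    intro x hx
    have hxp := hx3 x hx
    have hxe' := hxe x hx
    funext i
    fin_cases i
    · show fLogLin θ₂ θ₃ x 0 = _
      simp only [hFx, hbdef, Matrix.mulVec, dotProduct, Fin.sum_univ_three,
        Matrix.transpose_apply, Matrix.of_apply, fLogLin, Matrix.cons_val_zero,
        Matrix.cons_val_one, Matrix.head_cons, Matrix.cons_val_two, Matrix.tail_cons, Fin.zero_eta, Fin.mk_one, Fin.reduceFinMk]
      field_simp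
      ring
    · show fLogLin θ₂ θ₃ x 1 = _
      simp only [hFx, hbdef, Matrix.mulVec, dotProduct, Fin.sum_univ_three,
        Matrix.transpose_apply, Matrix.of_apply, fLogLin, Matrix.cons_val_zero,
        Matrix.cons_val_one, Matrix.head_cons, Matrix.cons_val_two, Matrix.tail_cons, Fin.zero_eta, Fin.mk_one, Fin.reduceFinMk]
      rw [hlm, hlU, hlx x hx]
      field_simp
      ring
    · show fLogLin θ₂ θ₃ x 2 = _
      simp only [hFx, hbdef, Matrix.mulVec, dotProduct, Fin.sum_univ_three,
        Matrix.transpose_apply, Matrix.of_apply, fLogLin, Matrix.cons_val_zero,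
        Matrix.cons_val_one, Matrix.head_cons, Matrix.cons_val_two, Matrix.tail_cons, Fin.zero_eta, Fin.mk_one, Fin.reduceFinMk]
      have j0 : θ₂/(x + θ₃) = θ₂ * exp (-(tx x)) / (L + θ₃) := by
        rw [div_eq_div_iff (ne_of_gt hxp) (ne_of_gt hc3)]
        linear_combination θ₂ * hxe'.symm
      have j1 : θ₂/(xs + θ₃) = θ₂ * μ / (L + θ₃) := by
        rw [div_eq_div_iff (ne_of_gt hxspos) (ne_of_gt hc3)]
        linear_combination θ₂ * hμxs.symm
      have j2 : θ₂/(U + θ₃) = θ₂ * a / (L + θ₃) := by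
        rw [div_eq_div_iff (ne_of_gt hD3) (ne_of_gt hc3)]
        linear_combination θ₂ * haU.symm
      rw [j0, j1, j2]
      field_simp
      ring
  -- norm bound for b
  have hbnorm : ∀ x ∈ Icc L U, (b x 0)^2 + (b x 1)^2 + (b x 2)^2 ≤ 1 := by
    intro x hx
    have hbd := hbound (tx x) ⟨htx0 x hx, htxT x hx⟩
    simp only [hbdef, Matrix.cons_val_zero, Matrix.cons_val_one, Matrix.head_cons,
      Matrix.cons_val_two, Matrix.tail_cons]
    rw [div_pow, div_pow, div_pow, ← add_div, ← add_div,
      div_le_one (by positivity)]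
    calc _ ≤ (m*a - μ*T + T - m)^2 := hbd
    _ = _ := by ring
  -- matrix reduction
  have hM : infoMat (logLinInfo θ₂ θ₃) ξ =
      Fxᵀ * (∑ x ∈ ξ.pts, ξ.w x • Matrix.vecMulVec (b x) (b x)) * Fx := by
    rw [infoMat, Matrix.mul_sum, Matrix.sum_mul]
    apply Finset.sum_congr rfl
    intro x hx
    rw [Matrix.mul_smul, Matrix.smul_mul]
    congr 1
    rw [logLinInfo, key x (ξ.mem_pts x hx), outer_conj]
  have hdetS := detS_le ξ.pts ξ.w b ξ.w_nonneg ξ.w_sum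
    (fun x hx => hbnorm x (ξ.mem_pts x hx))
  have hdetM : (infoMat (logLinInfo θ₂ θ₃) ξ).det
      = Fx.det^2 * (∑ x ∈ ξ.pts, ξ.w x • Matrix.vecMulVec (b x) (b x)).det := by
    rw [hM, Matrix.det_mul, Matrix.det_mul, Matrix.det_transpose]
    ring
  have hsum3 : logLinInfo θ₂ θ₃ L + logLinInfo θ₂ θ₃ xs + logLinInfo θ₂ θ₃ U = Fxᵀ * Fx := by
    ext i j
    simp only [logLinInfo, Matrix.add_apply, Matrix.vecMulVec_apply, Matrix.mul_apply,
      Fin.sum_univ_three, Matrix.transpose_apply, hFx, Matrix.of_apply,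
      Matrix.cons_val_zero, Matrix.cons_val_one, Matrix.head_cons,
      Matrix.cons_val_two, Matrix.tail_cons]
  have hRHS : ((1/3 : ℝ) • logLinInfo θ₂ θ₃ L + (1/3 : ℝ) • logLinInfo θ₂ θ₃ xs +
      (1/3 : ℝ) • logLinInfo θ₂ θ₃ U).det = Fx.det^2 / 27 := by
    rw [← smul_add, ← smul_add, hsum3, Matrix.det_smul, Matrix.det_mul,
      Matrix.det_transpose]
    norm_num
    ring
  calc (infoMat (logLinInfo θ₂ θ₃) ξ).det
      = Fx.det^2 * (∑ x ∈ ξ.pts, ξ.w x • Matrix.vecMulVec (b x) (b x)).det := hdetM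
    _ ≤ Fx.det^2 * (1/27) := mul_le_mul_of_nonneg_left hdetS (sq_nonneg _)
    _ = Fx.det^2 / 27 := by ring
    _ = _ := hRHS.symm
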